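/- For every real orthogonal $d \times d$ matrix $Z$ there exists a signature matrix $D$ (a diagonal matrix whose diagonal entries are $\pm 1$) such that $ZD$ does not have $-1$ as an eigenvalue (i.e., $I_d + ZD$ is invertible) and the Cayley transform $A = (I_d - ZD)(I_d + ZD)^{-1}$ satisfies $|A_{ij}| \le 1$ for all $1 \le i, j \le d$. -/

import Mathlib

open Matrix Finset

namespace Stmt2Aux

noncomputable def sgn (b : Bool) : ℝ := if b then 1 else -1

lemma sgn_eq (b : Bool) : sgn b = 1 ∨ sgn b = -1 := by cases b <;> simp [sgn]

lemma sgn_not (b : Bool) : sgn (!b) = -sgn b := by cases b <;> simp [sgn]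

variable {d : ℕ}

noncomputable def gS (Z : Matrix (Fin d) (Fin d) ℝ) (S : Finset (Fin d)) : ℝ :=
  (Matrix.detRowAlternating (R := ℝ) (n := Fin d)).toMultilinearMap
    (S.piecewise (fun i => (Zᵀ : Matrix (Fin d) (Fin d) ℝ) i)
      (fun i => (1 : Matrix (Fin d) (Fin d) ℝ) i))

/-- Expansion of `det (1 + Z * diagonal c)` as a multiaffine function of `c`. -/
lemma det_expand (Z : Matrix (Fin d) (Fin d) ℝ) (c : Fin d → ℝ) :
    det (1 + Z * diagonal c) = ∑ S : Finset (Fin d), (∏ i ∈ S, c i) * gS Z S := by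
  set f := (Matrix.detRowAlternating (R := ℝ) (n := Fin d)).toMultilinearMap with hf
  set z : Fin d → Fin d → ℝ := fun i => (Zᵀ : Matrix (Fin d) (Fin d) ℝ) i with hz
  set e : Fin d → Fin d → ℝ := fun i => (1 : Matrix (Fin d) (Fin d) ℝ) i with he
  set a : Fin d → Fin d → ℝ := fun i => c i • z i with ha
  have h1 : det (1 + Z * diagonal c) = f (a + e) := by
    rw [← Matrix.det_transpose]
    have h2 : (1 + Z * diagonal c)ᵀ = Matrix.of (a + e) := by
      ext i l
      simp only [Matrix.transpose_apply, Matrix.add_apply, Matrix.one_apply, Matrix.mul_apply,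
        Matrix.diagonal_apply, Matrix.of_apply, Pi.add_apply, ha, hz, he, Pi.smul_apply,
        smul_eq_mul]
      rw [Finset.sum_eq_single i (by intro b _ hb; simp [hb]) (by simp)]
      simp only [if_pos rfl]
      rcases eq_or_ne l i with h | h
      · subst h; simp [mul_comm, add_comm]
      · simp [h, Ne.symm h, mul_comm]
    rw [h2]
    rfl
  rw [h1, MultilinearMap.map_add_univ f a e]
  refine Finset.sum_congr rfl fun S _ => ?_
  have hp : S.piecewise a e =
      S.piecewise (fun i => c i • (S.piecewise z e) i) (S.piecewise z e) := by
    ext i l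
    by_cases hi : i ∈ S <;> simp [hi, ha]
  rw [hp, MultilinearMap.map_piecewise_smul f c (S.piecewise z e) S, smul_eq_mul]
  rfl

/-- The hypercube character sum. -/
lemma sum_prod_sgn (S : Finset (Fin d)) :
    ∑ s : Fin d → Bool, ∏ i ∈ S, sgn (s i) = if S = ∅ then (2 : ℝ) ^ d else 0 := by
  rcases eq_or_ne S ∅ with hS | hS
  · subst hS
    simp [Finset.card_univ, Fintype.card_fun]
  · rw [if_neg hS]
    obtain ⟨j, hj⟩ := Finset.nonempty_iff_ne_empty.2 hS
    refine Finset.sum_involution (fun s _ => Function.update s j (!s j)) ?_ ?_ ?_ ?_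
    · intro s _
      have key : ∏ i ∈ S, sgn (Function.update s j (!s j) i) = -∏ i ∈ S, sgn (s i) := by
        rw [← Finset.mul_prod_erase S _ hj, ← Finset.mul_prod_erase S (fun i => sgn (s i)) hj]
        have h2 : ∏ i ∈ S.erase j, sgn (Function.update s j (!s j) i) =
            ∏ i ∈ S.erase j, sgn (s i) :=
          Finset.prod_congr rfl fun i hi => by
            rw [Function.update_of_ne (Finset.ne_of_mem_erase hi)]
        rw [h2, Function.update_self, sgn_not]
        ring
      rw [key]; ring
    · intro s _ _ hcon
      have := congrFun hcon j
      simp at this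
    · intro s _; exact Finset.mem_univ _
    · intro s _
      ext i
      rcases eq_or_ne i j with h | h
      · subst h; simp
      · simp [Function.update_of_ne h]

/-- The sum of the determinants over the hypercube is `2 ^ d`. -/
lemma sum_det (Z : Matrix (Fin d) (Fin d) ℝ) :
    ∑ s : Fin d → Bool, det (1 + Z * diagonal (fun i => sgn (s i))) = (2 : ℝ) ^ d := by
  simp_rw [det_expand Z]
  rw [Finset.sum_comm]
  have h1 : ∀ S : Finset (Fin d),
      ∑ s : Fin d → Bool, (∏ i ∈ S, sgn (s i)) * gS Z S =
      (if S = ∅ then (2 : ℝ) ^ d else 0) * gS Z S := by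
    intro S; rw [← Finset.sum_mul, sum_prod_sgn]
  simp_rw [h1, ite_mul, zero_mul]
  rw [Finset.sum_ite_eq' (Finset.univ : Finset (Finset (Fin d))) ∅ (fun S => (2:ℝ)^d * gS Z S)]
  have hg : gS Z ∅ = 1 := by
    have h2 : (∅ : Finset (Fin d)).piecewise (fun i => (Zᵀ : Matrix (Fin d) (Fin d) ℝ) i)
        (fun i => (1 : Matrix (Fin d) (Fin d) ℝ) i) =
        (fun i => (1 : Matrix (Fin d) (Fin d) ℝ) i) := Finset.piecewise_empty _ _
    rw [gS, h2]
    exact Matrix.det_one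
  simp [hg]

/-- Skew-symmetry of the Cayley transform of an orthogonal matrix. -/
lemma cayley_skew (W : Matrix (Fin d) (Fin d) ℝ) (hW : Wᵀ * W = 1)
    (hdet : IsUnit (1 + W).det) :
    ((1 - W) * (1 + W)⁻¹)ᵀ = -((1 - W) * (1 + W)⁻¹) := by
  set B : Matrix (Fin d) (Fin d) ℝ := 1 + W with hB
  have hdetT : IsUnit Bᵀ.det := by rwa [Matrix.det_transpose]
  set A : Matrix (Fin d) (Fin d) ℝ := (1 - W) * B⁻¹ with hA
  have hAT : Aᵀ = Bᵀ⁻¹ * (1 - Wᵀ) := by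
    rw [hA, Matrix.transpose_mul, Matrix.transpose_nonsing_inv, Matrix.transpose_sub,
      Matrix.transpose_one]
  have h1 : Bᵀ * A * B = Bᵀ * (1 - W) := by
    rw [hA, Matrix.mul_assoc, Matrix.nonsing_inv_mul_cancel_right _ _ hdet]
  have h2 : Bᵀ * Aᵀ * B = (1 - Wᵀ) * B := by
    rw [hAT, Matrix.mul_nonsing_inv_cancel_left _ _ hdetT]
  have hBT : Bᵀ = 1 + Wᵀ := by rw [hB, Matrix.transpose_add, Matrix.transpose_one]
  have key : Bᵀ * A * B + Bᵀ * Aᵀ * B = 0 := by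
    rw [h1, h2, hBT, hB]
    have expand : (1 + Wᵀ) * (1 - W) + (1 - Wᵀ) * (1 + W) =
        (1 : Matrix (Fin d) (Fin d) ℝ) + 1 - Wᵀ * W - Wᵀ * W := by noncomm_ring
    rw [expand, hW]
    abel
  have hz : Bᵀ * (A + Aᵀ) * B = 0 := by
    rw [show Bᵀ * (A + Aᵀ) * B = Bᵀ * A * B + Bᵀ * Aᵀ * B from by noncomm_ring, key]
  have e1 : Bᵀ⁻¹ * (Bᵀ * (A + Aᵀ) * B) * B⁻¹ = A + Aᵀ := by
    rw [Matrix.mul_assoc Bᵀ (A + Aᵀ) B, Matrix.nonsing_inv_mul_cancel_left _ _ hdetT,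
      Matrix.mul_nonsing_inv_cancel_right _ _ hdet]
  rw [hz] at e1
  simp only [Matrix.mul_zero, Matrix.zero_mul] at e1
  have : A + Aᵀ = 0 := e1.symm
  linear_combination (norm := abel) this


/-- Flipping the signs of two columns multiplies the determinant by a 2x2 minor
of the Cayley transform. -/
lemma flip_det (W W' : Matrix (Fin d) (Fin d) ℝ) (hdet : IsUnit (1 + W).det)
    (j k : Fin d) (hjk : j ≠ k)
    (hW' : ∀ i l, W' i l = if l = j ∨ l = k then -W i l else W i l) :
    det (1 + W') = det (1 + W) *
      (((1 - W) * (1 + W)⁻¹) j j * ((1 - W) * (1 + W)⁻¹) k k -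
       ((1 - W) * (1 + W)⁻¹) j k * ((1 - W) * (1 + W)⁻¹) k j) := by
  set B : Matrix (Fin d) (Fin d) ℝ := 1 + W with hB
  set A : Matrix (Fin d) (Fin d) ℝ := (1 - W) * B⁻¹ with hA
  set q : Fin 2 → Fin d := ![j, k] with hq
  set U : Matrix (Fin d) (Fin 2) ℝ := Matrix.of fun i t => -2 * W i (q t) with hU
  set V : Matrix (Fin 2) (Fin d) ℝ := Matrix.of fun t l => if l = q t then 1 else 0 with hV
  have hBB : B * B⁻¹ = 1 := Matrix.mul_nonsing_inv _ hdet
  have hc : W * B = B * W := by rw [hB]; noncomm_ring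
  have hIB : B⁻¹ * B = 1 := Matrix.nonsing_inv_mul _ hdet
  have hAW : W * B⁻¹ = B⁻¹ * W := by
    calc W * B⁻¹ = B⁻¹ * B * (W * B⁻¹) := by rw [hIB, Matrix.one_mul]
      _ = B⁻¹ * (B * W * B⁻¹) := by
          rw [Matrix.mul_assoc B⁻¹ B (W * B⁻¹), ← Matrix.mul_assoc B W B⁻¹]
      _ = B⁻¹ * (W * B * B⁻¹) := by rw [← hc]
      _ = B⁻¹ * W := by rw [Matrix.mul_assoc W B B⁻¹, hBB, Matrix.mul_one]
  have hA1 : A - 1 = (-2 : ℝ) • (B⁻¹ * W) := by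
    calc A - 1 = (1 - W) * B⁻¹ - B * B⁻¹ := by rw [hBB, hA]
      _ = ((1 - W) - B) * B⁻¹ := by noncomm_ring
      _ = ((-2 : ℝ) • W) * B⁻¹ := by
          congr 1
          rw [hB]
          ext p l
          simp [Matrix.sub_apply, Matrix.add_apply, Matrix.smul_apply, smul_eq_mul]
          ring
      _ = (-2 : ℝ) • (W * B⁻¹) := by rw [smul_mul_assoc]
      _ = (-2 : ℝ) • (B⁻¹ * W) := by rw [hAW]
  have hUV : 1 + W' = B + U * V := by
    ext p l
    have hsum : (U * V) p l = -2 * W p j * (if l = j then 1 else 0)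
        + -2 * W p k * (if l = k then 1 else 0) := by
      rw [Matrix.mul_apply, Fin.sum_univ_two]
      simp [hU, hV, hq]
      by_cases h : l = j <;> simp [h]
    simp only [hB, Matrix.add_apply, hW' p l, hsum]
    by_cases h1 : l = j
    · simp [h1, hjk]
      ring
    · by_cases h2 : l = k
      · simp [h1, h2, Ne.symm hjk]
        ring
      · simp [h1, h2]
  have hfact : 1 + W' = B * (1 + B⁻¹ * U * V) := by
    rw [Matrix.mul_add, Matrix.mul_one, ← Matrix.mul_assoc, ← Matrix.mul_assoc, hBB,
      Matrix.one_mul, hUV]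
  have hdetsplit : det (1 + W') = det B * det (1 + V * (B⁻¹ * U)) := by
    rw [hfact, Matrix.det_mul, Matrix.det_one_add_mul_comm (B⁻¹ * U) V]
  have hBU : ∀ (p : Fin d) (t : Fin 2), (B⁻¹ * U) p t = (A - 1) p (q t) := by
    intro p t
    rw [hA1]
    simp only [Matrix.smul_apply, smul_eq_mul, Matrix.mul_apply, hU, Matrix.of_apply,
      Finset.mul_sum]
    exact Finset.sum_congr rfl fun x _ => by ring
  have hVBU : ∀ (s t : Fin 2), (V * (B⁻¹ * U)) s t = (A - 1) (q s) (q t) := by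
    intro s t
    rw [Matrix.mul_apply]
    rw [Finset.sum_eq_single (q s) (by intro b _ hb; simp [hV, hb]) (by simp)]
    simp [hV, hBU]
  have hqinj : Function.Injective q := by
    intro s t hst
    fin_cases s <;> fin_cases t <;>
      first
        | rfl
        | (exfalso; exact hjk (by simpa [hq] using hst))
        | (exfalso; exact hjk (by simpa [hq] using hst.symm))
  have hN : (1 + V * (B⁻¹ * U)) = Matrix.of (fun s t => A (q s) (q t)) := by
    ext s t
    rw [Matrix.add_apply, hVBU]
    have hone : (1 : Matrix (Fin 2) (Fin 2) ℝ) s t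
        = (1 : Matrix (Fin d) (Fin d) ℝ) (q s) (q t) := by
      by_cases h : s = t
      · subst h; simp [Matrix.one_apply]
      · rw [Matrix.one_apply_ne h, Matrix.one_apply_ne (fun hh => h (hqinj hh))]
    simp [Matrix.sub_apply, hone]
  rw [hdetsplit, hN, Matrix.det_fin_two]
  simp [hq]

end Stmt2Aux

open Stmt2Aux in
/-- For every real orthogonal matrix `Z` there is a signature matrix `D` (diagonal with
`±1` entries) such that `I + Z * D` is invertible and all entries of the Cayley transform
`(I - Z * D)(I + Z * D)⁻¹` are at most `1` in absolute value. -/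
theorem stmt_2 (d : ℕ) (Z : Matrix (Fin d) (Fin d) ℝ) (hZ : Zᵀ * Z = 1) :
    ∃ D : Matrix (Fin d) (Fin d) ℝ,
      D.IsDiag ∧ (∀ i, D i i = 1 ∨ D i i = -1) ∧
      IsUnit (1 + Z * D) ∧
      ∀ i j, |((1 - Z * D) * (1 + Z * D)⁻¹) i j| ≤ 1 := by
  classical
  set F : (Fin d → Bool) → ℝ :=
    fun s => det (1 + Z * diagonal (fun i => sgn (s i))) with hF
  obtain ⟨s₀, -, hmax⟩ := Finset.exists_max_image (Finset.univ : Finset (Fin d → Bool))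
    (fun s => |F s|) ⟨fun _ => true, Finset.mem_univ _⟩
  have hsum := sum_det Z
  have hpos : ∃ s : Fin d → Bool, 0 < F s := by
    by_contra h
    push_neg at h
    have h2 : ∑ s : Fin d → Bool, F s ≤ 0 := Finset.sum_nonpos fun s _ => h s
    rw [hsum] at h2
    have h3 : (0:ℝ) < 2 ^ d := by positivity
    linarith
  obtain ⟨s₁, hs₁⟩ := hpos
  have hFs₀ : 0 < |F s₀| :=
    lt_of_lt_of_le (lt_of_lt_of_le hs₁ (le_abs_self _)) (hmax s₁ (Finset.mem_univ _))
  set ε : Fin d → ℝ := fun i => sgn (s₀ i) with hε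
  set D : Matrix (Fin d) (Fin d) ℝ := diagonal ε with hD
  have hdetne : (1 + Z * D).det ≠ 0 := by
    intro h
    rw [hD] at h
    have : F s₀ = 0 := h
    rw [this] at hFs₀
    simp at hFs₀
  have hdet : IsUnit (1 + Z * D).det := isUnit_iff_ne_zero.2 hdetne
  set W : Matrix (Fin d) (Fin d) ℝ := Z * D with hW
  have hWo : Wᵀ * W = 1 := by
    have hDT : Dᵀ = D := by rw [hD, Matrix.diagonal_transpose]
    have hDD : D * D = 1 := by
      rw [hD, Matrix.diagonal_mul_diagonal]
      have : (fun i => ε i * ε i) = fun _ => (1 : ℝ) := by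
        funext i
        rcases sgn_eq (s₀ i) with h | h <;> rw [hε] <;> simp <;> rw [h] <;> norm_num
      rw [this, Matrix.diagonal_one]
    calc Wᵀ * W = Dᵀ * Zᵀ * (Z * D) := by rw [hW, Matrix.transpose_mul]
      _ = D * (Zᵀ * Z) * D := by
          rw [hDT, Matrix.mul_assoc, Matrix.mul_assoc, Matrix.mul_assoc]
      _ = D * D := by rw [hZ, Matrix.mul_one]
      _ = 1 := hDD
  have hskew := cayley_skew W hWo hdet
  set A : Matrix (Fin d) (Fin d) ℝ := (1 - W) * (1 + W)⁻¹ with hA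
  have hdiag : ∀ i, A i i = 0 := by
    intro i
    have h := congrFun (congrFun hskew i) i
    simp only [Matrix.transpose_apply, Matrix.neg_apply] at h
    linarith
  have hanti : ∀ i j, A j i = -A i j := by
    intro i j
    have h := congrFun (congrFun hskew i) j
    simpa only [Matrix.transpose_apply, Matrix.neg_apply] using h
  refine ⟨D, by rw [hD]; exact Matrix.isDiag_diagonal ε, ?_, ?_, ?_⟩
  · intro i
    rw [hD, Matrix.diagonal_apply_eq]
    exact sgn_eq (s₀ i)
  · exact (Matrix.isUnit_iff_isUnit_det _).2 hdet
  · intro i j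
    rcases eq_or_ne i j with rfl | hij
    · rw [show ((1 - Z * D) * (1 + Z * D)⁻¹) i i = A i i from rfl, hdiag]
      norm_num
    · -- flip the two signs at i and j
      set s' : Fin d → Bool := Function.update (Function.update s₀ i (!s₀ i)) j (!s₀ j)
        with hs'
      set ε' : Fin d → ℝ := fun l => sgn (s' l) with hε'
      have hW' : ∀ p l, (Z * diagonal ε') p l = if l = i ∨ l = j then -W p l else W p l := by
        intro p l
        rw [Matrix.mul_diagonal, hW, hD, Matrix.mul_diagonal]
        have hl : ε' l = if l = i ∨ l = j then -ε l else ε l := by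
          show sgn (Function.update (Function.update s₀ i (!s₀ i)) j (!s₀ j) l)
              = if l = i ∨ l = j then -sgn (s₀ l) else sgn (s₀ l)
          by_cases h1 : l = j
          · subst h1
            rw [Function.update_self, sgn_not]
            simp
          · rw [Function.update_of_ne h1]
            by_cases h2 : l = i
            · subst h2
              rw [Function.update_self, sgn_not]
              simp [h1]
            · rw [Function.update_of_ne h2]
              simp [h1, h2]
        rw [hl]
        by_cases h : l = i ∨ l = j <;> simp [h]
      have hflip := flip_det W (Z * diagonal ε') hdet i j hij hW'
      have hdet' : det (1 + Z * diagonal ε') = F s' := rfl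
      have hmax' : |F s'| ≤ |F s₀| := hmax s' (Finset.mem_univ _)
      rw [← hdet', hflip] at hmax'
      have hFW : det (1 + W) = F s₀ := rfl
      rw [hFW, abs_mul] at hmax'
      have hexpr : A i i * A j j - A i j * A j i = A i j ^ 2 := by
        rw [hdiag, hanti i j]
        ring
      rw [hexpr] at hmax'
      have hsq : A i j ^ 2 ≤ 1 := by
        have h2 : |F s₀| * |A i j ^ 2| ≤ |F s₀| * 1 := by rwa [mul_one]
        have h3 : |A i j ^ 2| ≤ 1 := le_of_mul_le_mul_left h2 hFs₀
        calc A i j ^ 2 ≤ |A i j ^ 2| := le_abs_self _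
          _ ≤ 1 := h3
      exact (sq_le_one_iff_abs_le_one (A i j)).1 hsq
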